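/- Let Ω ⊆ ℝ^d be a bounded open set, φ a Musielak function on Ω, and let constants b₀, b₁, ν, ν₀, λ > 0 with b₁ = 2 b₀ and ν b₀ − 2 b₁ ν₀ > 0 be given. Let b : ℝ → ℝ be differentiable with b₀ < b'(s) < b₁ for all s. Let a : Ω × ℝ^d → ℝ^d satisfy the coercivity a(x,ξ)·ξ ≥ ν φ(x,|ξ|) for all ξ ∈ ℝ^d and a.e. x ∈ Ω, and let K : ℝ → ℝ^d satisfy the pointwise bound |K(s)·ξ| ≤ ν₀ (φ(x, |s|/λ) + φ(x, |ξ|)) for all s ∈ ℝ, ξ ∈ ℝ^d and a.e. x ∈ Ω. Let N ∈ ℕ, τ = T/N > 0, f₁, …, f_N ∈ L²(Ω), and let u⁰, u¹, …, u^N : Ω → ℝ be differentiable functions with b(u^n) ∈ L²(Ω) and ∫_Ω φ(x, |∇u^n(x)|) dx < ∞ for each n, satisfying for each n the Poincaré-type modular inequality ∫_Ω φ(x, |u^n(x)|/λ) dx ≤ ∫_Ω φ(x, |∇u^n(x)|) dx, and the tested discrete scheme: for n = 1, …, N, ∫_Ω (b(u^n) − b(u^{n−1})) b(u^n) dx + τ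 ∫_Ω b'(u^n) a(x, ∇u^n)·∇u^n dx + τ ∫_Ω b'(u^n) K(u^n)·∇u^n dx = τ ∫_Ω f_n b(u^n) dx, where all integrals above are finite. Then for every n = 1, …, N: ‖b(u^n)‖²_{L²(Ω)} + Σ_{j=1}^{n} ‖b(u^j) − b(u^{j−1})‖²_{L²(Ω)} + 2τ (ν b₀ − 2 b₁ ν₀) Σ_{j=1}^{n} ∫_Ω φ(x, |∇u^j(x)|) dx ≤ 8 ( (Σ_{j=1}^{N} τ ‖f_j‖_{L²(Ω)})² + ‖b(u⁰)‖²_{L²(Ω)} ). -/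

import Mathlib

open MeasureTheory Filter

private lemma tele_sum (c : ℕ → ℝ) (n : ℕ) :
    ∑ j ∈ Finset.Icc 1 n, (c j - c (j - 1)) = c n - c 0 := by
  induction n with
  | zero => simp
  | succ n ih =>
      rw [← Finset.insert_Icc_right_eq_Icc_add_one (Nat.succ_le_succ (Nat.zero_le n)),
        Finset.sum_insert (by simp), ih]
      simp only [Nat.add_sub_cancel]; ring

private lemma l2_sq {X : Type*} [MeasurableSpace X] {μ : Measure X}
    (g : X → ℝ) (hg : MemLp g 2 μ) :
    ∫ x, g x * g x ∂μ = ((eLpNorm g 2 μ).toReal) ^ 2 := by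
  have hGg : (hg.toLp g : X →₂[μ] ℝ) =ᵐ[μ] g := hg.coeFn_toLp
  have h1 : (inner ℝ (hg.toLp g) (hg.toLp g) : ℝ) = ∫ x, g x * g x ∂μ := by
    rw [MeasureTheory.L2.inner_def]
    refine integral_congr_ae ?_
    filter_upwards [hGg] with x hx
    simp [hx, RCLike.inner_apply]; ring
  rw [← h1, real_inner_self_eq_norm_sq, Lp.norm_toLp g hg]

private lemma l2_cs {X : Type*} [MeasurableSpace X] {μ : Measure X}
    (g h : X → ℝ) (hg : MemLp g 2 μ) (hh : MemLp h 2 μ) :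
    ∫ x, g x * h x ∂μ ≤ (eLpNorm g 2 μ).toReal * (eLpNorm h 2 μ).toReal := by
  have h1 : (inner ℝ (hg.toLp g) (hh.toLp h) : ℝ) = ∫ x, g x * h x ∂μ := by
    rw [MeasureTheory.L2.inner_def]
    refine integral_congr_ae ?_
    filter_upwards [hg.coeFn_toLp, hh.coeFn_toLp] with x hx hy
    simp [hx, hy, RCLike.inner_apply]; ring
  rw [← h1, ← Lp.norm_toLp g hg, ← Lp.norm_toLp h hh]
  exact real_inner_le_norm _ _

private lemma carath_meas {d : ℕ} (φ : EuclideanSpace ℝ (Fin d) → ℝ → ℝ)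
    (hφ_meas : ∀ t : ℝ, 0 ≤ t → Measurable fun x => φ x t)
    (hφ_cont : ∀ x, ContinuousOn (φ x) (Set.Ici 0))
    (g : EuclideanSpace ℝ (Fin d) → ℝ) {μ : Measure (EuclideanSpace ℝ (Fin d))}
    (hg : AEMeasurable g μ) (hg0 : ∀ x, 0 ≤ g x) :
    AEStronglyMeasurable (fun x => φ x (g x)) μ := by
  have hSM : StronglyMeasurable (Function.uncurry fun (t : ℝ) x => φ x (max t 0)) := by
    refine stronglyMeasurable_uncurry_of_continuous_of_stronglyMeasurable ?_ ?_
    · intro x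
      exact (hφ_cont x).comp_continuous (continuous_id.max continuous_const)
        (fun t => Set.mem_Ici.mpr (le_max_right _ _))
    · intro t
      exact (hφ_meas (max t 0) (le_max_right _ _)).stronglyMeasurable
  have h2 := hSM.aestronglyMeasurable.comp_aemeasurable
    (f := fun x => ((g x, x) : ℝ × EuclideanSpace ℝ (Fin d))) (hg.prodMk aemeasurable_id)
  refine h2.congr (Filter.Eventually.of_forall fun x => ?_)
  simp [Function.uncurry, max_eq_left (hg0 x)]

set_option maxHeartbeats 1000000

/-- A priori estimate for the backward Euler discrete solutions: under the
structural assumptions on `b`, the coercivity of `a`, the modular bound on `K`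
and the modular Poincaré inequality, the solutions of the tested discrete
scheme satisfy, for every `n = 1, …, N`,
`‖b(uⁿ)‖₂² + Σ_{j=1}^n ‖b(uʲ) − b(uʲ⁻¹)‖₂² + 2τ(νb₀ − 2b₁ν₀) Σ_{j=1}^n ∫_Ω φ(x,|∇uʲ|)
  ≤ 8((Σ_{j=1}^N τ‖f_j‖₂)² + ‖b(u⁰)‖₂²)`. -/
theorem stmt_4 {d : ℕ} (Ω : Set (EuclideanSpace ℝ (Fin d)))
    (hΩ_open : IsOpen Ω) (hΩ_bdd : Bornology.IsBounded Ω)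
    (φ : EuclideanSpace ℝ (Fin d) → ℝ → ℝ)
    (hφ_meas : ∀ t : ℝ, 0 ≤ t → Measurable fun x => φ x t)
    (hφ_nonneg : ∀ x, ∀ t : ℝ, 0 ≤ t → 0 ≤ φ x t)
    (hφ_conv : ∀ x, ConvexOn ℝ (Set.Ici 0) (φ x))
    (hφ_cont : ∀ x, ContinuousOn (φ x) (Set.Ici 0))
    (hφ_mono : ∀ x, MonotoneOn (φ x) (Set.Ici 0))
    (hφ_zero : ∀ x, φ x 0 = 0)
    (hφ_pos : ∀ x, ∀ t : ℝ, 0 < t → 0 < φ x t)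
    (hφ_lim0 : ∀ x,
      Tendsto (fun t : ℝ => φ x t / t) (nhdsWithin 0 (Set.Ioi 0)) (nhds 0))
    (hφ_limtop : ∀ x, Tendsto (fun t : ℝ => φ x t / t) atTop atTop)
    (b₀ b₁ ν ν₀ lam : ℝ)
    (hb₀ : 0 < b₀) (hb₁ : 0 < b₁) (hν : 0 < ν) (hν₀ : 0 < ν₀) (hlam : 0 < lam)
    (hb₁_eq : b₁ = 2 * b₀) (hcoef : 0 < ν * b₀ - 2 * b₁ * ν₀)
    (b : ℝ → ℝ) (hb_diff : Differentiable ℝ b)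
    (hb' : ∀ s : ℝ, b₀ < deriv b s ∧ deriv b s < b₁)
    (a : EuclideanSpace ℝ (Fin d) → EuclideanSpace ℝ (Fin d) → EuclideanSpace ℝ (Fin d))
    (ha_coer : ∀ᵐ x ∂(volume.restrict Ω), ∀ ξ : EuclideanSpace ℝ (Fin d),
      ν * φ x ‖ξ‖ ≤ (inner ℝ (a x ξ) ξ : ℝ))
    (K : ℝ → EuclideanSpace ℝ (Fin d))
    (hK : ∀ᵐ x ∂(volume.restrict Ω), ∀ s : ℝ, ∀ ξ : EuclideanSpace ℝ (Fin d),
      |(inner ℝ (K s) ξ : ℝ)| ≤ ν₀ * (φ x (|s| / lam) + φ x ‖ξ‖))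
    (N : ℕ) (hN : 1 ≤ N) (T τ : ℝ) (hT : 0 < T) (hτ_def : τ = T / N)
    (f : ℕ → EuclideanSpace ℝ (Fin d) → ℝ)
    (hf : ∀ n ∈ Finset.Icc 1 N, MemLp (f n) 2 (volume.restrict Ω))
    (u : ℕ → EuclideanSpace ℝ (Fin d) → ℝ)
    (hu_diff : ∀ n ≤ N, ∀ x ∈ Ω, DifferentiableAt ℝ (u n) x)
    (hbu_L2 : ∀ n ≤ N, MemLp (fun x => b (u n x)) 2 (volume.restrict Ω))
    (hmodular_fin : ∀ n ≤ N,
      IntegrableOn (fun x => φ x ‖gradient (u n) x‖) Ω volume)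
    (hPoincare : ∀ n ≤ N,
      ∫⁻ x in Ω, ENNReal.ofReal (φ x (|u n x| / lam)) ≤
        ∫⁻ x in Ω, ENNReal.ofReal (φ x ‖gradient (u n) x‖))
    (hint1 : ∀ n ∈ Finset.Icc 1 N, IntegrableOn
      (fun x => (b (u n x) - b (u (n - 1) x)) * b (u n x)) Ω volume)
    (hint2 : ∀ n ∈ Finset.Icc 1 N, IntegrableOn
      (fun x => deriv b (u n x) * (inner ℝ (a x (gradient (u n) x)) (gradient (u n) x) : ℝ))
      Ω volume)
    (hint3 : ∀ n ∈ Finset.Icc 1 N, IntegrableOn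
      (fun x => deriv b (u n x) * (inner ℝ (K (u n x)) (gradient (u n) x) : ℝ)) Ω volume)
    (hint4 : ∀ n ∈ Finset.Icc 1 N, IntegrableOn
      (fun x => f n x * b (u n x)) Ω volume)
    (hscheme : ∀ n ∈ Finset.Icc 1 N,
      (∫ x in Ω, (b (u n x) - b (u (n - 1) x)) * b (u n x))
        + τ * (∫ x in Ω,
            deriv b (u n x) * (inner ℝ (a x (gradient (u n) x)) (gradient (u n) x) : ℝ))
        + τ * (∫ x in Ω,
            deriv b (u n x) * (inner ℝ (K (u n x)) (gradient (u n) x) : ℝ))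
      = τ * ∫ x in Ω, f n x * b (u n x)) :
    ∀ n ∈ Finset.Icc 1 N,
      (eLpNorm (fun x => b (u n x)) 2 (volume.restrict Ω)).toReal ^ 2
        + (∑ j ∈ Finset.Icc 1 n,
            (eLpNorm (fun x => b (u j x) - b (u (j - 1) x)) 2
              (volume.restrict Ω)).toReal ^ 2)
        + 2 * τ * (ν * b₀ - 2 * b₁ * ν₀) *
            ∑ j ∈ Finset.Icc 1 n, ∫ x in Ω, φ x ‖gradient (u j) x‖
      ≤ 8 * ((∑ j ∈ Finset.Icc 1 N,
            τ * (eLpNorm (f j) 2 (volume.restrict Ω)).toReal) ^ 2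
          + (eLpNorm (fun x => b (u 0 x)) 2 (volume.restrict Ω)).toReal ^ 2) := by
  classical
  have hΩm : MeasurableSet Ω := hΩ_open.measurableSet
  have hτ : 0 < τ := by
    rw [hτ_def]
    have hN' : (0 : ℝ) < (N : ℝ) := by
      exact_mod_cast Nat.lt_of_lt_of_le Nat.zero_lt_one hN
    positivity
  set S : ℕ → ℝ := fun m =>
    (eLpNorm (fun x => b (u m x)) 2 (volume.restrict Ω)).toReal with hSdef
  set D : ℕ → ℝ := fun j =>
    (eLpNorm (fun x => b (u j x) - b (u (j - 1) x)) 2 (volume.restrict Ω)).toReal ^ 2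
    with hDdef
  set P : ℕ → ℝ := fun j => ∫ x in Ω, φ x ‖gradient (u j) x‖ with hPdef
  set F : ℕ → ℝ := fun j => τ * (eLpNorm (f j) 2 (volume.restrict Ω)).toReal with hFdef
  set c : ℝ := ν * b₀ - 2 * b₁ * ν₀ with hcdef
  have hS0 : ∀ m, 0 ≤ S m := fun m => ENNReal.toReal_nonneg
  have hD0 : ∀ j, 0 ≤ D j := fun j => sq_nonneg _
  have hP0 : ∀ j, 0 ≤ P j :=
    fun j => integral_nonneg fun x => hφ_nonneg x _ (norm_nonneg _)
  have hF0 : ∀ j, 0 ≤ F j := fun j => mul_nonneg hτ.le ENNReal.toReal_nonneg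
  -- measurability of x ↦ φ x (|u m x| / lam)
  have huMeas : ∀ m, m ≤ N → AEMeasurable (u m) (volume.restrict Ω) := by
    intro m hm
    have hcont : ContinuousOn (u m) Ω :=
      fun x hx => (hu_diff m hm x hx).continuousAt.continuousWithinAt
    exact hcont.aemeasurable hΩm
  have hφuMeas : ∀ m, m ≤ N →
      AEStronglyMeasurable (fun x => φ x (|u m x| / lam)) (volume.restrict Ω) := by
    intro m hm
    exact carath_meas φ hφ_meas hφ_cont _
      ((measurable_abs.div_const lam).comp_aemeasurable (huMeas m hm))
      (fun x => div_nonneg (abs_nonneg _) hlam.le)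
  have hφu_nonneg : ∀ m, ∀ x, 0 ≤ φ x (|u m x| / lam) :=
    fun m x => hφ_nonneg x _ (div_nonneg (abs_nonneg _) hlam.le)
  -- integrability and bound for the lower-order modular term
  have hφuInt : ∀ m, m ≤ N →
      Integrable (fun x => φ x (|u m x| / lam)) (volume.restrict Ω) := by
    intro m hm
    refine (lintegral_ofReal_ne_top_iff_integrable (hφuMeas m hm)
      (Filter.Eventually.of_forall (hφu_nonneg m))).mp ?_
    refine ne_of_lt (lt_of_le_of_lt (hPoincare m hm) (lt_top_iff_ne_top.mpr ?_))
    have hInt : Integrable (fun x => φ x ‖gradient (u m) x‖) (volume.restrict Ω) :=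
      hmodular_fin m hm
    exact (lintegral_ofReal_ne_top_iff_integrable hInt.aestronglyMeasurable
      (Filter.Eventually.of_forall fun x => hφ_nonneg x _ (norm_nonneg _))).mpr hInt
  have hφu_le : ∀ m, m ≤ N →
      (∫ x in Ω, φ x (|u m x| / lam)) ≤ P m := by
    intro m hm
    have hInt : Integrable (fun x => φ x ‖gradient (u m) x‖) (volume.restrict Ω) :=
      hmodular_fin m hm
    simp only [hPdef]
    rw [integral_eq_lintegral_of_nonneg_ae
        (Filter.Eventually.of_forall (hφu_nonneg m)) (hφuMeas m hm),
      integral_eq_lintegral_of_nonneg_ae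
        (Filter.Eventually.of_forall fun x => hφ_nonneg x _ (norm_nonneg _))
        hInt.aestronglyMeasurable]
    refine ENNReal.toReal_mono ?_ (hPoincare m hm)
    exact (lintegral_ofReal_ne_top_iff_integrable hInt.aestronglyMeasurable
      (Filter.Eventually.of_forall fun x => hφ_nonneg x _ (norm_nonneg _))).mpr hInt
  -- per-step estimate
  have hstep : ∀ j ∈ Finset.Icc 1 N,
      S j ^ 2 - S (j - 1) ^ 2 ≤ 2 * (F j * S j) - D j - 2 * τ * c * P j := by
    intro j hj
    obtain ⟨hj1, hjN⟩ := Finset.mem_Icc.mp hj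
    have hjN' : j - 1 ≤ N := le_trans (Nat.sub_le _ _) hjN
    have hp : MemLp (fun x => b (u j x)) 2 (volume.restrict Ω) := hbu_L2 j hjN
    have hq : MemLp (fun x => b (u (j - 1) x)) 2 (volume.restrict Ω) := hbu_L2 _ hjN'
    have hpq : MemLp (fun x => b (u j x) - b (u (j - 1) x)) 2 (volume.restrict Ω) :=
      hp.sub hq
    have hint_pp : Integrable (fun x => b (u j x) * b (u j x)) (volume.restrict Ω) := by
      simpa [pow_two] using hp.integrable_sq
    have hint_qq : Integrable (fun x => b (u (j-1) x) * b (u (j-1) x))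
        (volume.restrict Ω) := by
      simpa [pow_two] using hq.integrable_sq
    have hint_dd : Integrable
        (fun x => (b (u j x) - b (u (j-1) x)) * (b (u j x) - b (u (j-1) x)))
        (volume.restrict Ω) := by
      simpa [pow_two] using hpq.integrable_sq
    -- A1 identity
    have hA1 : (∫ x in Ω, (b (u j x) - b (u (j - 1) x)) * b (u j x))
        = (1/2) * S j ^ 2 - (1/2) * S (j-1) ^ 2 + (1/2) * D j := by
      have e1 : (fun x => (b (u j x) - b (u (j - 1) x)) * b (u j x))
          = fun x => ((1/2) * (b (u j x) * b (u j x))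
              - (1/2) * (b (u (j-1) x) * b (u (j-1) x)))
              + (1/2) * ((b (u j x) - b (u (j-1) x)) * (b (u j x) - b (u (j-1) x))) := by
        funext x; ring
      rw [show (∫ x in Ω, (b (u j x) - b (u (j - 1) x)) * b (u j x))
          = ∫ x in Ω, (((1/2) * (b (u j x) * b (u j x))
              - (1/2) * (b (u (j-1) x) * b (u (j-1) x)))
              + (1/2) * ((b (u j x) - b (u (j-1) x)) * (b (u j x) - b (u (j-1) x))))
          from by rw [e1]]
      have hsubInt : Integrable (fun x => (1/2) * (b (u j x) * b (u j x))
          - (1/2) * (b (u (j-1) x) * b (u (j-1) x))) (volume.restrict Ω) :=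
        (hint_pp.const_mul _).sub (hint_qq.const_mul _)
      rw [integral_add hsubInt (hint_dd.const_mul _),
        integral_sub (hint_pp.const_mul _) (hint_qq.const_mul _),
        integral_const_mul, integral_const_mul, integral_const_mul,
        l2_sq _ hp, l2_sq _ hq, l2_sq _ hpq]
    -- A2 coercivity
    have hA2 : ν * b₀ * P j ≤
        ∫ x in Ω, deriv b (u j x) *
          (inner ℝ (a x (gradient (u j) x)) (gradient (u j) x) : ℝ) := by
      have hInt1 : Integrable (fun x => ν * b₀ * φ x ‖gradient (u j) x‖)
          (volume.restrict Ω) := (hmodular_fin j hjN).const_mul _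
      have hmono : ∀ᵐ x ∂(volume.restrict Ω),
          ν * b₀ * φ x ‖gradient (u j) x‖ ≤ deriv b (u j x) *
            (inner ℝ (a x (gradient (u j) x)) (gradient (u j) x) : ℝ) := by
        filter_upwards [ha_coer] with x hx
        have h1 := hx (gradient (u j) x)
        have hφn : 0 ≤ φ x ‖gradient (u j) x‖ := hφ_nonneg x _ (norm_nonneg _)
        have hinner0 : 0 ≤ (inner ℝ (a x (gradient (u j) x)) (gradient (u j) x) : ℝ) :=
          le_trans (by positivity) h1
        have hd := hb' (u j x)
        calc ν * b₀ * φ x ‖gradient (u j) x‖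
            = b₀ * (ν * φ x ‖gradient (u j) x‖) := by ring
          _ ≤ b₀ * (inner ℝ (a x (gradient (u j) x)) (gradient (u j) x) : ℝ) :=
              mul_le_mul_of_nonneg_left h1 hb₀.le
          _ ≤ deriv b (u j x) *
              (inner ℝ (a x (gradient (u j) x)) (gradient (u j) x) : ℝ) :=
              mul_le_mul_of_nonneg_right hd.1.le hinner0
      calc ν * b₀ * P j = ∫ x in Ω, ν * b₀ * φ x ‖gradient (u j) x‖ := by
            simp only [hPdef]; rw [integral_const_mul]
        _ ≤ _ := integral_mono_ae hInt1 (hint2 j hj) hmono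
    -- A3 bound
    have hA3 : |∫ x in Ω, deriv b (u j x) *
          (inner ℝ (K (u j x)) (gradient (u j) x) : ℝ)| ≤ 2 * (b₁ * ν₀) * P j := by
      have hIb : Integrable
          (fun x => b₁ * ν₀ * (φ x (|u j x| / lam) + φ x ‖gradient (u j) x‖))
          (volume.restrict Ω) := ((hφuInt j hjN).add (hmodular_fin j hjN)).const_mul _
      have hbound : ∀ᵐ x ∂(volume.restrict Ω),
          ‖deriv b (u j x) * (inner ℝ (K (u j x)) (gradient (u j) x) : ℝ)‖ ≤
            b₁ * ν₀ * (φ x (|u j x| / lam) + φ x ‖gradient (u j) x‖) := by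
        filter_upwards [hK] with x hx
        have h1 := hx (u j x) (gradient (u j) x)
        have hd := hb' (u j x)
        rw [Real.norm_eq_abs, abs_mul]
        have h2 : |deriv b (u j x)| ≤ b₁ :=
          abs_le.mpr ⟨by linarith [hd.1], hd.2.le⟩
        calc |deriv b (u j x)| * |(inner ℝ (K (u j x)) (gradient (u j) x) : ℝ)|
            ≤ b₁ * (ν₀ * (φ x (|u j x| / lam) + φ x ‖gradient (u j) x‖)) :=
              mul_le_mul h2 h1 (abs_nonneg _) hb₁.le
          _ = b₁ * ν₀ * (φ x (|u j x| / lam) + φ x ‖gradient (u j) x‖) := by ring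
      have hnorm := norm_integral_le_of_norm_le hIb hbound
      rw [Real.norm_eq_abs] at hnorm
      calc |∫ x in Ω, deriv b (u j x) *
            (inner ℝ (K (u j x)) (gradient (u j) x) : ℝ)|
          ≤ ∫ x in Ω, b₁ * ν₀ * (φ x (|u j x| / lam) + φ x ‖gradient (u j) x‖) :=
            hnorm
        _ = b₁ * ν₀ * ((∫ x in Ω, φ x (|u j x| / lam)) + P j) := by
            simp only [hPdef]
            rw [integral_const_mul, integral_add (hφuInt j hjN) (hmodular_fin j hjN)]
        _ ≤ b₁ * ν₀ * (P j + P j) := by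
            refine mul_le_mul_of_nonneg_left ?_ (by positivity)
            exact add_le_add_left (hφu_le j hjN) _
        _ = 2 * (b₁ * ν₀) * P j := by ring
    -- A4 bound
    have hA4 : (∫ x in Ω, f j x * b (u j x)) ≤
        (eLpNorm (f j) 2 (volume.restrict Ω)).toReal * S j := by
      simp only [hSdef]
      exact l2_cs _ _ (hf j hj) hp
    -- combine
    have hsch := hscheme j hj
    have hA2' : τ * (ν * b₀ * P j) ≤ τ * (∫ x in Ω, deriv b (u j x) *
        (inner ℝ (a x (gradient (u j) x)) (gradient (u j) x) : ℝ)) :=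
      mul_le_mul_of_nonneg_left hA2 hτ.le
    have hA3' : -(τ * (2 * (b₁ * ν₀) * P j)) ≤ τ * (∫ x in Ω, deriv b (u j x) *
        (inner ℝ (K (u j x)) (gradient (u j) x) : ℝ)) := by
      nlinarith [hA3, abs_nonneg (∫ x in Ω, deriv b (u j x) *
        (inner ℝ (K (u j x)) (gradient (u j) x) : ℝ)),
        neg_abs_le (∫ x in Ω, deriv b (u j x) *
        (inner ℝ (K (u j x)) (gradient (u j) x) : ℝ)), hτ, hP0 j]
    have hA4' : τ * (∫ x in Ω, f j x * b (u j x)) ≤ F j * S j := by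
      simp only [hFdef]
      calc τ * (∫ x in Ω, f j x * b (u j x))
          ≤ τ * ((eLpNorm (f j) 2 (volume.restrict Ω)).toReal * S j) :=
            mul_le_mul_of_nonneg_left hA4 hτ.le
        _ = τ * (eLpNorm (f j) 2 (volume.restrict Ω)).toReal * S j := by ring
    simp only [hcdef]
    nlinarith [hA1, hsch, hA2', hA3', hA4']
  -- telescoped sum estimate
  have hsum : ∀ m ∈ Finset.Icc 1 N,
      S m ^ 2 - S 0 ^ 2 + (∑ j ∈ Finset.Icc 1 m, D j)
        + 2 * τ * c * (∑ j ∈ Finset.Icc 1 m, P j)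
      ≤ 2 * ∑ j ∈ Finset.Icc 1 m, F j * S j := by
    intro m hm
    obtain ⟨hm1, hmN⟩ := Finset.mem_Icc.mp hm
    have h1 : S m ^ 2 - S 0 ^ 2 =
        ∑ j ∈ Finset.Icc 1 m, (S j ^ 2 - S (j - 1) ^ 2) :=
      (tele_sum (fun k => S k ^ 2) m).symm
    have h2 : ∑ j ∈ Finset.Icc 1 m, (S j ^ 2 - S (j - 1) ^ 2) ≤
        ∑ j ∈ Finset.Icc 1 m, (2 * (F j * S j) - D j - 2 * τ * c * P j) := by
      refine Finset.sum_le_sum fun j hj => ?_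
      obtain ⟨hj1, hjm⟩ := Finset.mem_Icc.mp hj
      exact hstep j (Finset.mem_Icc.mpr ⟨hj1, hjm.trans hmN⟩)
    have h3 : ∑ j ∈ Finset.Icc 1 m, (2 * (F j * S j) - D j - 2 * τ * c * P j)
        = 2 * (∑ j ∈ Finset.Icc 1 m, F j * S j)
          - (∑ j ∈ Finset.Icc 1 m, D j)
          - 2 * τ * c * (∑ j ∈ Finset.Icc 1 m, P j) := by
      rw [Finset.sum_sub_distrib, Finset.sum_sub_distrib, ← Finset.mul_sum,
        ← Finset.mul_sum]
    have h4 := h2.trans (le_of_eq h3)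
    linarith [h1, h4]
  -- the max of the S j
  intro n hn
  obtain ⟨hn1, hnN⟩ := Finset.mem_Icc.mp hn
  have hne : (Finset.Icc 1 N).Nonempty := ⟨1, Finset.mem_Icc.mpr ⟨le_rfl, hN⟩⟩
  set M : ℝ := (Finset.Icc 1 N).sup' hne S with hMdef
  have hMS : ∀ j ∈ Finset.Icc 1 N, S j ≤ M := fun j hj => Finset.le_sup' S hj
  have hM0 : 0 ≤ M := le_trans (hS0 1) (hMS 1 (Finset.mem_Icc.mpr ⟨le_rfl, hN⟩))
  set Ft : ℝ := ∑ j ∈ Finset.Icc 1 N, F j with hFtdef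
  have hFt0 : 0 ≤ Ft := Finset.sum_nonneg fun j _ => hF0 j
  have hFSum : ∀ m, m ≤ N → (∑ j ∈ Finset.Icc 1 m, F j * S j) ≤ Ft * M := by
    intro m hm
    calc ∑ j ∈ Finset.Icc 1 m, F j * S j
        ≤ ∑ j ∈ Finset.Icc 1 m, F j * M := by
          refine Finset.sum_le_sum fun j hj => ?_
          obtain ⟨hj1, hjm⟩ := Finset.mem_Icc.mp hj
          exact mul_le_mul_of_nonneg_left
            (hMS j (Finset.mem_Icc.mpr ⟨hj1, hjm.trans hm⟩)) (hF0 j)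
      _ ≤ ∑ j ∈ Finset.Icc 1 N, F j * M := by
          refine Finset.sum_le_sum_of_subset_of_nonneg ?_ ?_
          · exact Finset.Icc_subset_Icc le_rfl hm
          · exact fun j _ _ => mul_nonneg (hF0 j) hM0
      _ = Ft * M := by rw [hFtdef, Finset.sum_mul]
  have hSm_bound : ∀ m ∈ Finset.Icc 1 N, S m ^ 2 ≤ S 0 ^ 2 + 2 * (Ft * M) := by
    intro m hm
    obtain ⟨hm1, hmN⟩ := Finset.mem_Icc.mp hm
    have h1 := hsum m hm
    have h2 := hFSum m hmN
    have h3 : 0 ≤ ∑ j ∈ Finset.Icc 1 m, D j :=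
      Finset.sum_nonneg fun j _ => hD0 j
    have h4 : 0 ≤ 2 * τ * c * (∑ j ∈ Finset.Icc 1 m, P j) := by
      have : 0 ≤ ∑ j ∈ Finset.Icc 1 m, P j := Finset.sum_nonneg fun j _ => hP0 j
      have hc : 0 < c := hcoef
      positivity
    linarith
  obtain ⟨m₀, hm₀, hMeq⟩ := Finset.exists_mem_eq_sup' hne S
  have hMsq : M ^ 2 ≤ S 0 ^ 2 + 2 * (Ft * M) := by
    have h0 : M = S m₀ := by rw [hMdef, hMeq]
    calc M ^ 2 = S m₀ ^ 2 := by rw [h0]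
      _ ≤ S 0 ^ 2 + 2 * (Ft * M) := hSm_bound m₀ hm₀
  have hM2 : M ^ 2 ≤ 2 * S 0 ^ 2 + 4 * Ft ^ 2 := by
    nlinarith [sq_nonneg (M - 2 * Ft)]
  -- final assembly
  suffices h : S n ^ 2 + (∑ j ∈ Finset.Icc 1 n, D j)
      + 2 * τ * c * (∑ j ∈ Finset.Icc 1 n, P j)
      ≤ 8 * (Ft ^ 2 + S 0 ^ 2) by
    simpa only [hSdef, hDdef, hPdef, hFdef, hcdef, hFtdef] using h
  have h1 := hsum n hn
  have h2 := hFSum n hnN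
  nlinarith [sq_nonneg (M - 2 * Ft), sq_nonneg (S 0), hFt0, hM0, hM2]
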